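/- Let G be a finite metanilpotent group, let D = γ_∞(G) be the intersection of the lower central series of G, let p be a prime, K_p a Sylow p-subgroup of D, and H a Hall p'-subgroup of G. If K_p is abelian, then K_p = [K_p, H] and C_{K_p}(H) = 1; in particular K_p ∩ Z(G) = 1. -/

import Mathlib

open Subgroup
open scoped Pointwise
open scoped commutatorElement

universe u

section Helpers

variable {X : Type u} [Group X]

private lemma conj_map_eq (T : Subgroup X) (hT : T.Normal) (g : X) :
    T.map (MulAut.conj g).toMonoidHom = T := by
  ext x
  simp only [Subgroup.mem_map, MulEquiv.coe_toMonoidHom, MulAut.conj_apply]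
  constructor
  · rintro ⟨t, ht, rfl⟩; exact hT.conj_mem t ht g
  · intro hx
    refine ⟨g⁻¹ * x * g, ?_, by group⟩
    simpa using hT.conj_mem x hx g⁻¹

private lemma card_conj_eq (S : Subgroup X) (g : X) :
    Nat.card (S.map (MulAut.conj g).toMonoidHom) = Nat.card S :=
  (Nat.card_congr (S.equivMapOfInjective _ ((MulAut.conj g).injective)).toEquiv).symm

private lemma card_map_dvd {Y : Type*} [Group Y] (f : X →* Y) (S : Subgroup X) :
    Nat.card (S.map f) ∣ Nat.card S := by
  have h1 : S.map f = (f.comp S.subtype).range := by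
    rw [MonoidHom.range_eq_map, ← Subgroup.map_map]
    congr 1
    rw [← MonoidHom.range_eq_map, Subgroup.range_subtype]
  rw [h1, ← Nat.card_congr (QuotientGroup.quotientKerEquivRange (f.comp S.subtype)).toEquiv]
  exact Subgroup.card_quotient_dvd_card _

private lemma card_mul_relIndex {A B : Subgroup X} (h : A ≤ B) :
    Nat.card A * A.relIndex B = Nat.card B := by
  have h1 := Subgroup.card_mul_index (A.subgroupOf B)
  rwa [Nat.card_congr (Subgroup.subgroupOfEquivOfLe h).toEquiv] at h1

private lemma sub_eq_of_le_card [Finite X] {A B : Subgroup X} (h : A ≤ B)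
    (hc : Nat.card B ≤ Nat.card A) : A = B := by
  have h1 := card_mul_relIndex h
  have hpos : 0 < Nat.card A := Nat.card_pos
  have hpos' : 0 < Nat.card B := Nat.card_pos
  have hne : A.relIndex B ≠ 0 := by
    intro h0; rw [h0, mul_zero] at h1; omega
  have hle : A.relIndex B = 1 := by nlinarith [Nat.one_le_iff_ne_zero.mpr hne]
  exact le_antisymm h (Subgroup.relIndex_eq_one.mp hle)

private lemma card_sup_dvd [Finite X] (A B : Subgroup X) [hA : A.Normal] :
    Nat.card ↥(A ⊔ B) ∣ Nat.card A * Nat.card B := by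
  have h1 : Nat.card (A.subgroupOf (A ⊔ B)) * (A.subgroupOf (A ⊔ B)).index
      = Nat.card ↥(A ⊔ B) := Subgroup.card_mul_index _
  have h2 : Nat.card (A.subgroupOf (A ⊔ B)) = Nat.card A :=
    Nat.card_congr (Subgroup.subgroupOfEquivOfLe le_sup_left).toEquiv
  have h3 : (A.subgroupOf (A ⊔ B)).index = A.relIndex B := by
    rw [show (A.subgroupOf (A ⊔ B)).index = A.relIndex (A ⊔ B) from rfl]
    exact Subgroup.relIndex_sup_left (K := A) (H := B)
  have h4 : A.relIndex B ∣ Nat.card B := Subgroup.index_dvd_card (G := ↥B) (A.subgroupOf B)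
  rw [← h1, h2, h3]
  exact mul_dvd_mul_left _ h4

private lemma normal_eq_of_card_eq [Finite X] (A B : Subgroup X) [hAn : A.Normal] [hBn : B.Normal]
    (hcard : Nat.card B = Nat.card A)
    (hco : Nat.Coprime (Nat.card A) A.index) : A = B := by
  have h1 : Nat.card ↥(A ⊔ B) ∣ Nat.card A * Nat.card A := by
    have := card_sup_dvd A B
    rwa [hcard] at this
  obtain ⟨d, hd⟩ : Nat.card A ∣ Nat.card ↥(A ⊔ B) := Subgroup.card_dvd_of_le le_sup_left
  have hpos : 0 < Nat.card A := Nat.card_pos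
  have hdA : d ∣ Nat.card A := by
    rw [hd] at h1
    exact (mul_dvd_mul_iff_left hpos.ne').mp h1
  have hdI : d ∣ A.index := by
    have h2 : Nat.card ↥(A ⊔ B) ∣ Nat.card X := Subgroup.card_subgroup_dvd_card _
    rw [← Subgroup.card_mul_index (H := A), hd] at h2
    exact (mul_dvd_mul_iff_left hpos.ne').mp h2
  have hd1 : d = 1 := Nat.dvd_one.mp (hco ▸ Nat.dvd_gcd hdA hdI)
  have hAB : A = A ⊔ B := sub_eq_of_le_card le_sup_left (by rw [hd, hd1, mul_one])
  have hBA : B ≤ A := hAB ▸ le_sup_right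
  exact (sub_eq_of_le_card hBA (by rw [hcard])).symm

private lemma subgroupOf_normal_of_le_normalizer {S T : Subgroup X}
    (h : T ≤ Subgroup.normalizer (S : Set X)) : (S.subgroupOf T).Normal := by
  constructor
  intro x hx g
  rw [Subgroup.mem_subgroupOf] at hx ⊢
  have := (Subgroup.mem_normalizer_iff.mp (h g.2) x).mp hx
  simpa using this

private lemma center_nontrivial_of_nilpotent (W : Type u) [Group W] [Finite W]
    [Group.IsNilpotent W] [Nontrivial W] : Nontrivial (Subgroup.center W) := by
  by_contra hnt
  have hsub : Subsingleton (Subgroup.center W) := not_nontrivial_iff_subsingleton.mp hnt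
  have hbot : Subgroup.center W = ⊥ := by
    ext x
    simp only [Subgroup.mem_bot]
    constructor
    · intro hx
      have := Subsingleton.elim (⟨x, hx⟩ : Subgroup.center W) ⟨1, (Subgroup.center W).one_mem⟩
      exact congrArg Subtype.val this
    · rintro rfl; exact (Subgroup.center W).one_mem
  have hucs : ∀ k, Subgroup.upperCentralSeries W k = ⊥ := by
    intro k
    induction k with
    | zero => rfl
    | succ k ih =>
      ext x
      simp only [Subgroup.mem_bot]
      constructor
      · intro hx
        have hx' : x ∈ Subgroup.center W := by
          rw [Subgroup.mem_center_iff]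
          intro y
          have h2 := (Subgroup.mem_upperCentralSeries_succ_iff).mp hx y
          rw [ih, Subgroup.mem_bot] at h2
          have h3 : x * y * x⁻¹ = y := mul_inv_eq_one.mp h2
          have h4 : x * y = y * x := mul_inv_eq_iff_eq_mul.mp h3
          exact h4.symm
        rw [hbot, Subgroup.mem_bot] at hx'
        exact hx'
      · rintro rfl; exact (Subgroup.upperCentralSeries W (k+1)).one_mem
  obtain ⟨k, hk⟩ := (inferInstance : Group.IsNilpotent W).nilpotent
  obtain ⟨w, hw⟩ := exists_ne (1 : W)
  apply hw
  have : w ∈ Subgroup.upperCentralSeries W k := hk ▸ Subgroup.mem_top w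
  rw [hucs k, Subgroup.mem_bot] at this
  exact this

private lemma nilpotent_coprime_normal : ∀ (n : ℕ) (W : Type u) [Group W] [Finite W]
    [Group.IsNilpotent W], Nat.card W ≤ n → ∀ (S : Subgroup W),
    Nat.Coprime (Nat.card S) S.index → S.Normal := by
  intro n
  induction n with
  | zero =>
    intro W _ _ _ hcard S _
    exact absurd hcard (by have : 0 < Nat.card W := Nat.card_pos; omega)
  | succ n ih =>
    intro W _ _ _ hcard S hco
    rcases subsingleton_or_nontrivial W with hW | hW
    · exact ⟨fun x hx g => by rwa [Subsingleton.elim (g * x * g⁻¹) x]⟩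
    set Z := Subgroup.center W with hZdef
    haveI hZnt : Nontrivial Z := center_nontrivial_of_nilpotent W
    have hqlt : Nat.card (W ⧸ Z) < Nat.card W := by
      have h1 := Subgroup.card_eq_card_quotient_mul_card_subgroup Z
      have h2 : 1 < Nat.card Z := Finite.one_lt_card_iff_nontrivial.mpr hZnt
      have h3 : 0 < Nat.card (W ⧸ Z) := Nat.card_pos
      nlinarith
    have hidxdvd : (S.map (QuotientGroup.mk' Z)).index ∣ S.index := by
      rw [← Subgroup.index_comap_of_surjective _ (QuotientGroup.mk'_surjective Z),
        Subgroup.comap_map_eq, QuotientGroup.ker_mk']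
      exact Subgroup.index_dvd_of_le le_sup_left
    have hS'co : Nat.Coprime (Nat.card (S.map (QuotientGroup.mk' Z)))
        (S.map (QuotientGroup.mk' Z)).index :=
      ((hco.coprime_dvd_right hidxdvd).coprime_dvd_left (_root_.card_map_dvd _ _))
    haveI hS'n : (S.map (QuotientGroup.mk' Z)).Normal := ih (W ⧸ Z) (by omega) _ hS'co
    have hTn : (S ⊔ Z).Normal := by
      have := hS'n.comap (QuotientGroup.mk' Z)
      rwa [Subgroup.comap_map_eq, QuotientGroup.ker_mk'] at this
    have hZle : ∀ (S₀ : Subgroup W), Z ≤ Subgroup.normalizer (S₀ : Set W) := by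
      intro S₀ z hz
      rw [Subgroup.mem_normalizer_iff]
      intro x
      have h := Subgroup.mem_center_iff.mp hz x
      rw [show z * x * z⁻¹ = x by rw [← h]; group]
    have key : ∀ g : W, S.map (MulAut.conj g).toMonoidHom = S := by
      intro g
      set Sg := S.map (MulAut.conj g).toMonoidHom with hSgdef
      have hcardSg : Nat.card Sg = Nat.card S := card_conj_eq S g
      have hSgZ : Sg ⊔ Z = S ⊔ Z := by
        have h1 : Sg ⊔ Z = (S ⊔ Z).map (MulAut.conj g).toMonoidHom := by
          rw [Subgroup.map_sup, conj_map_eq Z inferInstance g]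
        rw [h1, conj_map_eq _ hTn g]
      have hST : S ≤ S ⊔ Z := le_sup_left
      have hSgT : Sg ≤ S ⊔ Z := hSgZ ▸ le_sup_left
      haveI hAn : (S.subgroupOf (S ⊔ Z)).Normal :=
        subgroupOf_normal_of_le_normalizer (sup_le Subgroup.le_normalizer (hZle S))
      haveI hBn : (Sg.subgroupOf (S ⊔ Z)).Normal :=
        subgroupOf_normal_of_le_normalizer
          (by rw [← hSgZ]; exact sup_le Subgroup.le_normalizer (hZle Sg))
      have hcardA : Nat.card (S.subgroupOf (S ⊔ Z)) = Nat.card S :=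
        Nat.card_congr (Subgroup.subgroupOfEquivOfLe hST).toEquiv
      have hcardB : Nat.card (Sg.subgroupOf (S ⊔ Z)) = Nat.card S :=
        (Nat.card_congr (Subgroup.subgroupOfEquivOfLe hSgT).toEquiv).trans hcardSg
      have hcoA : Nat.Coprime (Nat.card (S.subgroupOf (S ⊔ Z))) (S.subgroupOf (S ⊔ Z)).index := by
        rw [hcardA]
        exact hco.coprime_dvd_right ⟨(S ⊔ Z).index, (Subgroup.relIndex_mul_index hST).symm⟩
      have hABeq : S.subgroupOf (S ⊔ Z) = Sg.subgroupOf (S ⊔ Z) :=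
        normal_eq_of_card_eq _ _ (hcardB.trans hcardA.symm) hcoA
      have h5 := congrArg (Subgroup.map (S ⊔ Z).subtype) hABeq
      rw [Subgroup.subgroupOf_map_subtype, Subgroup.subgroupOf_map_subtype,
        inf_eq_left.mpr hST, inf_eq_left.mpr hSgT] at h5
      exact h5.symm
    constructor
    intro x hx g
    have : g * x * g⁻¹ ∈ S.map (MulAut.conj g).toMonoidHom :=
      ⟨x, hx, by simp [MulAut.conj_apply]⟩
    rwa [key g] at this

private lemma lcs_map_surj {Y : Type*} [Group Y] (f : X →* Y) (hf : Function.Surjective f)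
    (n : ℕ) : Subgroup.map f ((⊤ : Subgroup X).lowerCentralSeries n) = (⊤ : Subgroup Y).lowerCentralSeries n := by
  induction n with
  | zero => exact Subgroup.map_top_of_surjective f hf
  | succ n ih =>
    show Subgroup.map f ⁅(⊤ : Subgroup X).lowerCentralSeries n, ⊤⁆ = ⁅(⊤ : Subgroup Y).lowerCentralSeries n, ⊤⁆
    rw [Subgroup.map_commutator, ih, Subgroup.map_top_of_surjective f hf]

private lemma normal_of_coprime_in_residual {G : Type u} [Group G] [Finite G]
    {D S : Subgroup G} (hDnorm : D.Normal) [hDnil : Group.IsNilpotent ↥D] (hSD : S ≤ D)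
    (hco : Nat.Coprime (Nat.card S) (S.relIndex D)) : S.Normal := by
  have key : ∀ g : G, S.map (MulAut.conj g).toMonoidHom = S := by
    intro g
    set Sg := S.map (MulAut.conj g).toMonoidHom with hSgdef
    have hcardSg : Nat.card Sg = Nat.card S := card_conj_eq S g
    have hSgD : Sg ≤ D := by
      calc Sg ≤ D.map (MulAut.conj g).toMonoidHom := Subgroup.map_mono hSD
      _ = D := conj_map_eq D hDnorm g
    have hcardA : Nat.card (S.subgroupOf D) = Nat.card S :=
      Nat.card_congr (Subgroup.subgroupOfEquivOfLe hSD).toEquiv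
    have hcardB : Nat.card (Sg.subgroupOf D) = Nat.card S :=
      (Nat.card_congr (Subgroup.subgroupOfEquivOfLe hSgD).toEquiv).trans hcardSg
    have hidx : (Sg.subgroupOf D).index = (S.subgroupOf D).index := by
      have h1 := Subgroup.card_mul_index (S.subgroupOf D)
      have h2 := Subgroup.card_mul_index (Sg.subgroupOf D)
      rw [hcardA] at h1
      rw [hcardB] at h2
      have hpos : 0 < Nat.card S := Nat.card_pos
      exact Nat.eq_of_mul_eq_mul_left hpos (h2.trans h1.symm)
    have hcoA : Nat.Coprime (Nat.card (S.subgroupOf D)) (S.subgroupOf D).index := by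
      rw [hcardA]; exact hco
    have hcoB : Nat.Coprime (Nat.card (Sg.subgroupOf D)) (Sg.subgroupOf D).index := by
      rw [hcardB, hidx]; exact hco
    haveI hAn : (S.subgroupOf D).Normal :=
      nilpotent_coprime_normal (Nat.card ↥D) ↥D le_rfl _ hcoA
    haveI hBn : (Sg.subgroupOf D).Normal :=
      nilpotent_coprime_normal (Nat.card ↥D) ↥D le_rfl _ hcoB
    have hABeq : S.subgroupOf D = Sg.subgroupOf D :=
      normal_eq_of_card_eq _ _ (hcardB.trans hcardA.symm) hcoA
    have h5 := congrArg (Subgroup.map D.subtype) hABeq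
    rw [Subgroup.subgroupOf_map_subtype, Subgroup.subgroupOf_map_subtype,
      inf_eq_left.mpr hSD, inf_eq_left.mpr hSgD] at h5
    exact h5.symm
  constructor
  intro x hx g
  have : g * x * g⁻¹ ∈ S.map (MulAut.conj g).toMonoidHom :=
    ⟨x, hx, by simp [MulAut.conj_apply]⟩
  rwa [key g] at this

end Helpers

/-- The nilpotent residual `γ_∞(G)`: the intersection of the lower central series. -/
def nilpotentResidual (G : Type*) [Group G] : Subgroup G :=
  ⨅ n : ℕ, (⊤ : Subgroup G).lowerCentralSeries n

/-- Let `G` be a finite metanilpotent group, `D = γ_∞(G)`, `p` a prime,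
`K` a Sylow `p`-subgroup of `D`, and `H` a Hall `p'`-subgroup of `G`. If `K` is abelian
then `K = [K,H]`, `C_K(H) = 1`, and in particular `K ∩ Z(G) = 1`. -/
theorem stmt_10 {G : Type*} [Group G] [Finite G]
    (hmeta : ∃ (N : Subgroup G) (_ : N.Normal), Group.IsNilpotent N ∧ Group.IsNilpotent (G ⧸ N))
    (p : ℕ) (hp : p.Prime) (K : Subgroup G)
    (hKD : K ≤ nilpotentResidual G) (hKp : IsPGroup p K)
    (hKSyl : ¬ p ∣ K.relIndex (nilpotentResidual G))
    (H : Subgroup G) (hHp : ¬ p ∣ Nat.card H) (hHall : ∃ n : ℕ, H.index = p ^ n)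
    (hKab : ∀ x ∈ K, ∀ y ∈ K, Commute x y) :
    K = ⁅K, H⁆ ∧ K ⊓ Subgroup.centralizer (H : Set G) = ⊥ ∧
      K ⊓ Subgroup.center G = ⊥ := by
  classical
  haveI : Fact p.Prime := ⟨hp⟩
  obtain ⟨N, hNnorm, hNnil, hQnil⟩ := hmeta
  obtain ⟨n, hHidx⟩ := hHall
  -- stabilization of the lower central series
  obtain ⟨m, hm⟩ := Set.mem_range.mp
    (Nat.sInf_mem (Set.range_nonempty (fun k => Nat.card ((⊤ : Subgroup G).lowerCentralSeries k))))
  have hstab : ∀ k, m ≤ k → (⊤ : Subgroup G).lowerCentralSeries k = (⊤ : Subgroup G).lowerCentralSeries m := by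
    intro k hk
    refine sub_eq_of_le_card (Subgroup.lowerCentralSeries_antitone _ hk) ?_
    rw [hm]
    exact Nat.sInf_le ⟨k, rfl⟩
  have hDm : nilpotentResidual G = (⊤ : Subgroup G).lowerCentralSeries m := by
    apply le_antisymm
    · exact iInf_le _ m
    · refine le_iInf fun k => ?_
      rcases le_or_gt m k with h | h
      · rw [hstab k h]
      · exact Subgroup.lowerCentralSeries_antitone _ h.le
  haveI hDnormal : (nilpotentResidual G).Normal := by rw [hDm]; infer_instance
  have hDtop : ⁅nilpotentResidual G, (⊤ : Subgroup G)⁆ = nilpotentResidual G := by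
    rw [hDm]
    calc ⁅(⊤ : Subgroup G).lowerCentralSeries m, (⊤ : Subgroup G)⁆ = (⊤ : Subgroup G).lowerCentralSeries (m + 1) := rfl
      _ = (⊤ : Subgroup G).lowerCentralSeries m := hstab _ (Nat.le_succ m)
  -- D is contained in N, hence nilpotent
  have hDN : nilpotentResidual G ≤ N := by
    obtain ⟨c, hc⟩ := Subgroup.nilpotent_iff_lowerCentralSeries.mp hQnil
    have h1 : Subgroup.map (QuotientGroup.mk' N) ((⊤ : Subgroup G).lowerCentralSeries c) = ⊥ := by
      rw [lcs_map_surj _ (QuotientGroup.mk'_surjective N), hc]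
    rw [Subgroup.map_eq_bot_iff, QuotientGroup.ker_mk'] at h1
    exact le_trans (iInf_le _ c) h1
  haveI := hNnil
  haveI hDnil : Group.IsNilpotent ↥(nilpotentResidual G) := by
    have e := Subgroup.subgroupOfEquivOfLe hDN
    exact nilpotent_of_surjective e.toMonoidHom e.surjective
  -- K is a Sylow p-subgroup of D
  obtain ⟨a, hKcard⟩ := IsPGroup.iff_card.mp hKp
  have hrel : Nat.card K * K.relIndex (nilpotentResidual G) = Nat.card (nilpotentResidual G) :=
    card_mul_relIndex hKD
  have hcopK : Nat.Coprime (Nat.card K) (K.relIndex (nilpotentResidual G)) := by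
    rw [hKcard]; exact Nat.Coprime.pow_left a ((Nat.Prime.coprime_iff_not_dvd hp).mpr hKSyl)
  haveI hKnorm : K.Normal := normal_of_coprime_in_residual hDnormal hKD hcopK
  -- the p-complement O of K in D
  have hcardKsub : Nat.card (K.subgroupOf (nilpotentResidual G)) = Nat.card K :=
    Nat.card_congr (Subgroup.subgroupOfEquivOfLe hKD).toEquiv
  haveI hKsubnorm : (K.subgroupOf (nilpotentResidual G)).Normal :=
    nilpotent_coprime_normal _ _ le_rfl _ (by rw [hcardKsub]; exact hcopK)
  obtain ⟨O', hO'⟩ := Subgroup.exists_right_complement'_of_coprime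
    (N := K.subgroupOf (nilpotentResidual G)) (by rw [hcardKsub]; exact hcopK)
  set O := O'.map (nilpotentResidual G).subtype with hOdef
  have hOD : O ≤ nilpotentResidual G := Subgroup.map_subtype_le O'
  have hOcard : Nat.card O = K.relIndex (nilpotentResidual G) := by
    have h1 : Nat.card O = Nat.card O' :=
      (Nat.card_congr (Subgroup.equivMapOfInjective O' _
        (Subgroup.subtype_injective _)).toEquiv).symm
    have h2 := hO'.card_mul
    rw [hcardKsub] at h2
    rw [h1]
    exact Nat.eq_of_mul_eq_mul_left Nat.card_pos (h2.trans hrel.symm)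
  have hpO : ¬ p ∣ Nat.card O := by rw [hOcard]; exact hKSyl
  have hcopO : Nat.Coprime (Nat.card O) (O.relIndex (nilpotentResidual G)) := by
    have h4 : Nat.card O * O.relIndex (nilpotentResidual G) = Nat.card (nilpotentResidual G) :=
      card_mul_relIndex hOD
    have hOpos : 0 < Nat.card O := Nat.card_pos
    have h5 : O.relIndex (nilpotentResidual G) = Nat.card K := by
      apply Nat.eq_of_mul_eq_mul_left hOpos
      rw [h4, ← hrel, hOcard, mul_comm]
    rw [hOcard, h5, hKcard]
    exact Nat.Coprime.pow_right a ((Nat.Prime.coprime_iff_not_dvd hp).mpr hKSyl).symm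
  haveI hOnorm : O.Normal := normal_of_coprime_in_residual hDnormal hOD hcopO
  have hKOinf : K ⊓ O = ⊥ := inf_eq_bot_of_coprime
    (by rw [hKcard]; exact Nat.Coprime.pow_left a ((hp.coprime_iff_not_dvd).mpr hpO))
  have hKOsup : K ⊔ O = nilpotentResidual G := by
    apply sub_eq_of_le_card (sup_le hKD hOD)
    have hco6 : Nat.Coprime (Nat.card K) (Nat.card O) := by
      rw [hKcard]; exact Nat.Coprime.pow_left a ((hp.coprime_iff_not_dvd).mpr hpO)
    have h6 : Nat.card K * Nat.card O ∣ Nat.card ↥(K ⊔ O) :=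
      hco6.mul_dvd_of_dvd_of_dvd (Subgroup.card_dvd_of_le le_sup_left)
        (Subgroup.card_dvd_of_le le_sup_right)
    have h7 : Nat.card K * Nat.card O = Nat.card (nilpotentResidual G) := by
      rw [hOcard]; exact hrel
    rw [← h7]
    exact Nat.le_of_dvd Nat.card_pos h6
  have hKOcomm : ∀ x ∈ K, ∀ o ∈ O, Commute x o := fun x hx o ho =>
    Subgroup.commute_of_normal_of_disjoint K O hKnorm hOnorm (disjoint_iff.mpr hKOinf) x o hx ho
  -- G / D is nilpotent
  haveI hGDnil : Group.IsNilpotent (G ⧸ nilpotentResidual G) := by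
    rw [Subgroup.nilpotent_iff_lowerCentralSeries]
    refine ⟨m, ?_⟩
    rw [← lcs_map_surj (QuotientGroup.mk' (nilpotentResidual G))
      (QuotientGroup.mk'_surjective _) m, ← hDm, Subgroup.map_eq_bot_iff, QuotientGroup.ker_mk']
  -- H D is a normal subgroup of G
  haveI hMnorm : (H ⊔ nilpotentResidual G).Normal := by
    have h8 : (H.map (QuotientGroup.mk' (nilpotentResidual G))).Normal := by
      apply nilpotent_coprime_normal (Nat.card (G ⧸ nilpotentResidual G)) _ le_rfl
      have hidxd : (H.map (QuotientGroup.mk' (nilpotentResidual G))).index ∣ H.index := by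
        rw [← Subgroup.index_comap_of_surjective _ (QuotientGroup.mk'_surjective _),
          Subgroup.comap_map_eq, QuotientGroup.ker_mk']
        exact Subgroup.index_dvd_of_le le_sup_left
      have hcardd := _root_.card_map_dvd (QuotientGroup.mk' (nilpotentResidual G)) H
      have h9 : ¬ p ∣ Nat.card (H.map (QuotientGroup.mk' (nilpotentResidual G))) :=
        fun hdvd => hHp (hdvd.trans hcardd)
      obtain ⟨j, hj, hjeq⟩ := (Nat.dvd_prime_pow hp).mp (hHidx ▸ hidxd)
      rw [hjeq]
      exact Nat.Coprime.pow_right j ((hp.coprime_iff_not_dvd).mpr h9).symm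
    have h10 := h8.comap (QuotientGroup.mk' (nilpotentResidual G))
    rwa [Subgroup.comap_map_eq, QuotientGroup.ker_mk'] at h10
  -- commutator facts
  have hKtop_le : ⁅K, (⊤ : Subgroup G)⁆ ≤ K := by
    rw [Subgroup.commutator_le]
    intro k hk g _
    have h11 : ⁅k, g⁆ = k * (g * k⁻¹ * g⁻¹) := by rw [commutatorElement_def]; group
    rw [h11]
    exact K.mul_mem hk (hKnorm.conj_mem _ (K.inv_mem hk) g)
  have hKH_le : ⁅K, H⁆ ≤ K := by
    rw [Subgroup.commutator_le]
    intro k hk h _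
    have h11 : ⁅k, h⁆ = k * (h * k⁻¹ * h⁻¹) := by rw [commutatorElement_def]; group
    rw [h11]
    exact K.mul_mem hk (hKnorm.conj_mem _ (K.inv_mem hk) h)
  have hmapObot : Subgroup.map (QuotientGroup.mk' O) O = ⊥ := by
    rw [Subgroup.map_eq_bot_iff, QuotientGroup.ker_mk']
  have e1 : Subgroup.map (QuotientGroup.mk' O) K
      = Subgroup.map (QuotientGroup.mk' O) (nilpotentResidual G) := by
    rw [← hKOsup, Subgroup.map_sup, hmapObot, sup_bot_eq]
  have hmapK : Subgroup.map (QuotientGroup.mk' O) K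
      = Subgroup.map (QuotientGroup.mk' O) ⁅K, (⊤ : Subgroup G)⁆ := by
    calc Subgroup.map (QuotientGroup.mk' O) K
        = Subgroup.map (QuotientGroup.mk' O) (nilpotentResidual G) := e1
      _ = Subgroup.map (QuotientGroup.mk' O) ⁅nilpotentResidual G, ⊤⁆ := by rw [hDtop]
      _ = ⁅Subgroup.map (QuotientGroup.mk' O) (nilpotentResidual G),
            Subgroup.map (QuotientGroup.mk' O) ⊤⁆ := Subgroup.map_commutator _ _ _
      _ = ⁅Subgroup.map (QuotientGroup.mk' O) K, Subgroup.map (QuotientGroup.mk' O) ⊤⁆ := by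
          rw [e1]
      _ = Subgroup.map (QuotientGroup.mk' O) ⁅K, (⊤ : Subgroup G)⁆ :=
          (Subgroup.map_commutator _ _ _).symm
  have hKtop : ⁅K, (⊤ : Subgroup G)⁆ = K := by
    have h12 := congrArg (Subgroup.comap (QuotientGroup.mk' O)) hmapK
    rw [Subgroup.comap_map_eq, Subgroup.comap_map_eq, QuotientGroup.ker_mk'] at h12
    apply le_antisymm hKtop_le
    intro x hx
    have hx2 : x ∈ ⁅K, (⊤ : Subgroup G)⁆ ⊔ O := by
      rw [← h12]; exact (le_sup_left : K ≤ K ⊔ O) hx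
    rw [← SetLike.mem_coe, Subgroup.mul_normal] at hx2
    obtain ⟨y, hy, o, ho, rfl⟩ := Set.mem_mul.mp hx2
    have hoK : o ∈ K := by
      have h17 := K.mul_mem (K.inv_mem (hKtop_le hy)) hx
      simpa using h17
    have h18 : o ∈ K ⊓ O := ⟨hoK, ho⟩
    rw [hKOinf, Subgroup.mem_bot] at h18
    rw [h18, mul_one]
    exact hy
  -- ⁅K, H ⊔ D⁆ = ⁅K, H⁆
  have hKM_eq : ⁅K, H ⊔ nilpotentResidual G⁆ = ⁅K, H⁆ := by
    apply le_antisymm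
    · rw [Subgroup.commutator_le]
      intro k hk w hw
      rw [← SetLike.mem_coe, Subgroup.mul_normal] at hw
      obtain ⟨h, hh, d, hd, rfl⟩ := Set.mem_mul.mp hw
      have hd2 : d ∈ (K : Set G) * (O : Set G) := by
        rw [← Subgroup.mul_normal K O]
        rw [hKOsup]
        exact hd
      obtain ⟨k', hk', o, ho, rfl⟩ := Set.mem_mul.mp hd2
      have hcomm : Commute k (k' * o) := (hKab k hk k' hk').mul_right (hKOcomm k hk o ho)
      have hinv : (k' * o) * k⁻¹ * (k' * o)⁻¹ = k⁻¹ := by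
        have h13 : k⁻¹ * (k' * o) = (k' * o) * k⁻¹ := (hcomm.inv_left).eq
        rw [← h13]; group
      have h14 : ⁅k, h * (k' * o)⁆ = ⁅k, h⁆ := by
        have expand : ⁅k, h * (k' * o)⁆ = k * h * ((k' * o) * k⁻¹ * (k' * o)⁻¹) * h⁻¹ := by
          rw [commutatorElement_def]; group
        rw [expand, hinv, commutatorElement_def]
      rw [h14]
      exact Subgroup.commutator_mem_commutator hk hh
    · exact Subgroup.commutator_mono le_rfl le_sup_left
  -- the key normal subgroup L
  haveI hLnorm : (⁅K, H ⊔ nilpotentResidual G⁆ ⊔ O).Normal := Subgroup.sup_normal _ _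
  -- Sylow subgroup of G
  obtain ⟨P⟩ := (inferInstance : Nonempty (Sylow p G))
  have hGcard : Nat.card H * p ^ n = Nat.card G := by
    rw [← hHidx]; exact Subgroup.card_mul_index H
  have hfact : (Nat.card G).factorization p = n := by
    rw [← hGcard, Nat.factorization_mul (Nat.card_pos).ne' (pow_ne_zero n hp.pos.ne')]
    simp [Nat.Prime.factorization_pow, Nat.factorization_eq_zero_of_not_dvd hHp,
      hp.factorization]
  have hPcard : Nat.card (P : Subgroup G) = p ^ n := by
    rw [Sylow.card_eq_multiplicity, hfact]
  have hPH : Subgroup.IsComplement' (P : Subgroup G) H := by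
    apply Subgroup.isComplement'_of_coprime
    · rw [hPcard, mul_comm]; exact hGcard
    · rw [hPcard]; exact Nat.Coprime.pow_left n ((hp.coprime_iff_not_dvd).mpr hHp)
  -- the quotient by L kills K
  have hKL : K ≤ ⁅K, H ⊔ nilpotentResidual G⁆ ⊔ O := by
    set L := ⁅K, H ⊔ nilpotentResidual G⁆ ⊔ O with hLdef
    set π := QuotientGroup.mk' L with hπdef
    haveI hKbar_norm : (K.map π).Normal := hKnorm.map π (QuotientGroup.mk'_surjective L)
    set Q := K.map π ⊔ (P : Subgroup G).map π with hQdef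
    have hQp : IsPGroup p ↥Q := by
      obtain ⟨b, hb⟩ := IsPGroup.iff_card.mp (hKp.map π)
      obtain ⟨c', hc'⟩ := IsPGroup.iff_card.mp (P.isPGroup'.map π)
      have hdvd := card_sup_dvd (K.map π) ((P : Subgroup G).map π)
      rw [hb, hc', ← pow_add] at hdvd
      obtain ⟨e, _, heq⟩ := (Nat.dvd_prime_pow hp).mp hdvd
      exact IsPGroup.iff_card.mpr ⟨e, heq⟩
    haveI hQnilQ : Group.IsNilpotent ↥Q := hQp.isNilpotent
    have hKbar_top : ⁅K.map π, (⊤ : Subgroup (G ⧸ L))⁆ = K.map π := by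
      rw [← Subgroup.map_top_of_surjective π (QuotientGroup.mk'_surjective L),
        ← Subgroup.map_commutator, hKtop]
    have hKHbar : ⁅K.map π, H.map π⁆ = ⊥ := by
      rw [← Subgroup.map_commutator, Subgroup.map_eq_bot_iff, QuotientGroup.ker_mk']
      calc ⁅K, H⁆ ≤ ⁅K, H ⊔ nilpotentResidual G⁆ := Subgroup.commutator_mono le_rfl le_sup_left
        _ ≤ L := le_sup_left
    have hind : ∀ j, K.map π ≤ Subgroup.map Q.subtype ((⊤ : Subgroup ↥Q).lowerCentralSeries j) := by
      intro j
      induction j with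
      | zero =>
        have hQtop : Subgroup.map Q.subtype (⊤ : Subgroup ↥Q) = Q := by
          rw [← MonoidHom.range_eq_map, Subgroup.range_subtype]
        rw [show (⊤ : Subgroup ↥Q).lowerCentralSeries 0 = ⊤ from rfl, hQtop]
        exact le_sup_left
      | succ j ih =>
        rw [← hKbar_top, Subgroup.commutator_le]
        intro x hx gq _
        obtain ⟨g0, rfl⟩ := QuotientGroup.mk'_surjective L gq
        obtain ⟨⟨cP, hH0⟩, hch⟩ := (hPH.existsUnique g0).exists
        have hxh : ⁅x, π (hH0 : G)⁆ = 1 := by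
          have hmem : ⁅x, π (hH0 : G)⁆ ∈ ⁅K.map π, H.map π⁆ :=
            Subgroup.commutator_mem_commutator hx (Subgroup.mem_map_of_mem π hH0.2)
          rwa [hKHbar, Subgroup.mem_bot] at hmem
        have hg0 : (QuotientGroup.mk' L) g0 = π ((cP : G) * (hH0 : G)) := by
          rw [hπdef, hch]
        have hsplit : ⁅x, (QuotientGroup.mk' L) g0⁆ = ⁅x, π (cP : G)⁆ := by
          rw [hg0, map_mul]
          have expand : ⁅x, π (cP : G) * π (hH0 : G)⁆
              = ⁅x, π (cP : G)⁆ * (π (cP : G) * ⁅x, π (hH0 : G)⁆ * (π (cP : G))⁻¹) := by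
            rw [commutatorElement_def, commutatorElement_def, commutatorElement_def]; group
          rw [expand, hxh]
          group
        rw [hsplit]
        obtain ⟨x', hx', hxx'⟩ := ih hx
        have hcQ : π (cP : G) ∈ Q := (le_sup_right : (P : Subgroup G).map π ≤ Q)
          (Subgroup.mem_map_of_mem π cP.2)
        refine ⟨⁅x', (⟨π (cP : G), hcQ⟩ : ↥Q)⁆, ?_, ?_⟩
        · exact Subgroup.commutator_mem_commutator hx' (Subgroup.mem_top _)
        · rw [map_commutatorElement, hxx']
          rfl
    obtain ⟨j, hj⟩ := Subgroup.nilpotent_iff_lowerCentralSeries.mp hQnilQ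
    have h15 := hind j
    rw [hj, Subgroup.map_bot] at h15
    have h16 : K.map π = ⊥ := le_bot_iff.mp h15
    rw [Subgroup.map_eq_bot_iff, QuotientGroup.ker_mk'] at h16
    exact h16
  -- conclusion 1 : K = ⁅K, H⁆
  have hmain : K = ⁅K, H⁆ := by
    apply le_antisymm _ hKH_le
    intro x hx
    have hx2 := hKL hx
    rw [← SetLike.mem_coe, Subgroup.mul_normal, hKM_eq] at hx2
    obtain ⟨y, hy, o, ho, rfl⟩ := Set.mem_mul.mp hx2
    have hoK : o ∈ K := by
      have h17 := K.mul_mem (K.inv_mem (hKH_le hy)) hx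
      simpa using h17
    have h18 : o ∈ K ⊓ O := ⟨hoK, ho⟩
    rw [hKOinf, Subgroup.mem_bot] at h18
    rw [h18, mul_one]
    exact hy
  -- conclusion 2 : trivial centralizer, via an averaging homomorphism
  haveI : Fintype ↥H := Fintype.ofFinite ↥H
  letI commK : CommGroup ↥K :=
    { (inferInstance : Group ↥K) with
      mul_comm := fun x y => Subtype.ext (hKab x x.2 y y.2) }
  let χ : ↥H → (↥K →* ↥K) := fun h =>
    { toFun := fun x => ⟨(h : G) * x * (h : G)⁻¹, hKnorm.conj_mem _ x.2 _⟩
      map_one' := by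
        apply Subtype.ext
        simp
      map_mul' := fun x y => by
        apply Subtype.ext
        push_cast
        group }
  let ψ : ↥K →* ↥K := ∏ h : ↥H, χ h
  have hψ_apply : ∀ y : ↥K, ψ y = ∏ h : ↥H, χ h y := fun y => by
    rw [show ψ = ∏ h : ↥H, χ h from rfl, MonoidHom.finset_prod_apply]
  have hχcomp : ∀ (h b : ↥H) (y : ↥K), χ h (χ b y) = χ (h * b) y := fun h b y =>
    Subtype.ext (by
      show ((h : G) * ((b : G) * (y : G) * (b : G)⁻¹) * (h : G)⁻¹ : G)
        = ((h * b : ↥H) : G) * (y : G) * ((h * b : ↥H) : G)⁻¹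
      push_cast
      group)
  have hψconj : ∀ (b : ↥H) (y : ↥K), ψ (χ b y) = ψ y := by
    intro b y
    rw [hψ_apply, hψ_apply]
    calc ∏ h : ↥H, χ h (χ b y) = ∏ h : ↥H, χ (h * b) y :=
          Finset.prod_congr rfl (fun h _ => hχcomp h b y)
      _ = ∏ h : ↥H, χ h y := Fintype.prod_equiv (Equiv.mulRight b) _ _ (fun h => rfl)
  have key2 : ∀ x ∈ ⁅K, H⁆, ∃ hxK : x ∈ K, ψ ⟨x, hxK⟩ = 1 := by
    intro x hx
    rw [Subgroup.commutator_def] at hx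
    refine Subgroup.closure_induction ?_ ?_ ?_ ?_ hx
    · rintro z ⟨u, hu, v, hv, rfl⟩
      have hmemK : ⁅u, v⁆ ∈ K := by
        have h20 : ⁅u, v⁆ = u * (v * u⁻¹ * v⁻¹) := by rw [commutatorElement_def]; group
        rw [h20]
        exact K.mul_mem hu (hKnorm.conj_mem _ (K.inv_mem hu) v)
      refine ⟨hmemK, ?_⟩
      have hsplit : (⟨⁅u, v⁆, hmemK⟩ : ↥K)
          = ⟨u, hu⟩ * χ ⟨v, hv⟩ ⟨u⁻¹, K.inv_mem hu⟩ := by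
        apply Subtype.ext
        show ⁅u, v⁆ = u * (v * u⁻¹ * v⁻¹)
        rw [commutatorElement_def]; group
      rw [hsplit, map_mul, hψconj,
        show (⟨u⁻¹, K.inv_mem hu⟩ : ↥K) = (⟨u, hu⟩ : ↥K)⁻¹ from rfl, map_inv,
        mul_inv_cancel]
    · exact ⟨K.one_mem, by rw [show (⟨(1 : G), K.one_mem⟩ : ↥K) = 1 from rfl, map_one]⟩
    · rintro z w hz hw ⟨hzK, hψz⟩ ⟨hwK, hψw⟩
      refine ⟨K.mul_mem hzK hwK, ?_⟩
      rw [show (⟨z * w, K.mul_mem hzK hwK⟩ : ↥K) = ⟨z, hzK⟩ * ⟨w, hwK⟩ from rfl,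
        map_mul, hψz, hψw, mul_one]
    · rintro z hz ⟨hzK, hψz⟩
      refine ⟨K.inv_mem hzK, ?_⟩
      rw [show (⟨z⁻¹, K.inv_mem hzK⟩ : ↥K) = (⟨z, hzK⟩ : ↥K)⁻¹ from rfl, map_inv, hψz, inv_one]
  have hcent : K ⊓ Subgroup.centralizer (H : Set G) = ⊥ := by
    rw [eq_bot_iff]
    rintro x ⟨hxK, hxc⟩
    have hfix : ∀ h : ↥H, χ h ⟨x, hxK⟩ = ⟨x, hxK⟩ := by
      intro h
      apply Subtype.ext
      have h21 := Subgroup.mem_centralizer_iff.mp hxc (h : G) h.2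
      show (h : G) * x * (h : G)⁻¹ = x
      rw [h21, mul_inv_cancel_right]
    have hpow : ψ ⟨x, hxK⟩ = (⟨x, hxK⟩ : ↥K) ^ (Nat.card H) := by
      rw [hψ_apply]
      simp only [hfix]
      rw [Finset.prod_const, Finset.card_univ, Nat.card_eq_fintype_card]
    have hone : ψ ⟨x, hxK⟩ = 1 := by
      obtain ⟨hK', hψ'⟩ := key2 x (hmain ▸ hxK)
      exact hψ'
    have hordH : (⟨x, hxK⟩ : ↥K) ^ (Nat.card H) = 1 := by rw [← hpow]; exact hone
    have hd1 : orderOf (⟨x, hxK⟩ : ↥K) ∣ Nat.card H := orderOf_dvd_of_pow_eq_one hordH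
    have hd2 : orderOf (⟨x, hxK⟩ : ↥K) ∣ Nat.card ↥K := orderOf_dvd_natCard _
    have hco2 : Nat.Coprime (Nat.card ↥K) (Nat.card H) := by
      rw [hKcard]; exact Nat.Coprime.pow_left a ((hp.coprime_iff_not_dvd).mpr hHp)
    have hord1 : orderOf (⟨x, hxK⟩ : ↥K) = 1 :=
      Nat.dvd_one.mp (hco2 ▸ Nat.dvd_gcd hd2 hd1)
    have hx1 : (⟨x, hxK⟩ : ↥K) = 1 := orderOf_eq_one_iff.mp hord1
    rw [Subgroup.mem_bot]
    exact congrArg Subtype.val hx1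
  refine ⟨hmain, hcent, ?_⟩
  rw [eq_bot_iff, ← hcent]
  exact inf_le_inf_left K (Subgroup.center_le_centralizer (H : Set G))
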